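/- No formula of L_S is characteristic for any process with respect to simulation equivalence: there is no φ ∈ L_S and no process p such that for every process q, q ⊨ φ if and only if p ≡_S q. -/
import Mathlib


/-- Finite, loop-free CCS processes over the action set `Act`:
`p ::= 0 | a.p | p + p`. -/
inductive Proc (Act : Type) : Type
  | nil : Proc Act
  | pre : Act → Proc Act → Proc Act
  | plus : Proc Act → Proc Act → Proc Act

/-- The transition relation: `a.p —a→ p`, and `p₁ + p₂ —a→ p'` iff
`p₁ —a→ p'` or `p₂ —a→ p'`. -/
inductive Step {Act : Type} : Proc Act → Act → Proc Act → Prop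
  | pre (a : Act) (p : Proc Act) : Step (Proc.pre a p) a p
  | plusL : ∀ {p₁ p₂ p' : Proc Act} {a : Act},
      Step p₁ a p' → Step (Proc.plus p₁ p₂) a p'
  | plusR : ∀ {p₁ p₂ p' : Proc Act} {a : Act},
      Step p₂ a p' → Step (Proc.plus p₁ p₂) a p'

/-- HML formulas in negation normal form:
`φ ::= tt | ff | φ∧φ | φ∨φ | ⟨a⟩φ | [a]φ`. -/
inductive HML (Act : Type) : Type
  | tt : HML Act
  | ff : HML Act
  | conj : HML Act → HML Act → HML Act
  | disj : HML Act → HML Act → HML Act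
  | dia : Act → HML Act → HML Act
  | box : Act → HML Act → HML Act

/-- The satisfaction relation `p ⊨ φ`. -/
def Sat {Act : Type} : Proc Act → HML Act → Prop
  | _, HML.tt => True
  | _, HML.ff => False
  | p, HML.conj φ ψ => Sat p φ ∧ Sat p ψ
  | p, HML.disj φ ψ => Sat p φ ∨ Sat p ψ
  | p, HML.dia a φ => ∃ p', Step p a p' ∧ Sat p' φ
  | p, HML.box a φ => ∀ p', Step p a p' → Sat p' φ

/-- `φ` entails `ψ` iff every process satisfying `φ` satisfies `ψ`. -/
def Entails {Act : Type} (φ ψ : HML Act) : Prop :=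
  ∀ p : Proc Act, Sat p φ → Sat p ψ

/-- `R` is a simulation relation. -/
def IsSimulation {Act : Type} (R : Proc Act → Proc Act → Prop) : Prop :=
  ∀ p q, R p q → ∀ a p', Step p a p' → ∃ q', Step q a q' ∧ R p' q'

/-- The simulation preorder `≲_S`: the largest simulation. -/
def Sim {Act : Type} (p q : Proc Act) : Prop :=
  ∃ R, IsSimulation R ∧ R p q

/-- The set `I(p)` of initial actions of a process. -/
def initials {Act : Type} (p : Proc Act) : Set Act :=
  {a | ∃ p', Step p a p'}

/-- The fragment `L_S`: `φ ::= tt | ff | φ∧φ | φ∨φ | ⟨a⟩φ`. -/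
inductive InLS {Act : Type} : HML Act → Prop
  | tt : InLS HML.tt
  | ff : InLS HML.ff
  | conj : ∀ {φ ψ : HML Act}, InLS φ → InLS ψ → InLS (HML.conj φ ψ)
  | disj : ∀ {φ ψ : HML Act}, InLS φ → InLS ψ → InLS (HML.disj φ ψ)
  | dia : ∀ {a : Act} {φ : HML Act}, InLS φ → InLS (HML.dia a φ)


/-- Depth of a process. -/
def pdepth {Act : Type} : Proc Act → Nat
  | Proc.nil => 0
  | Proc.pre _ p => pdepth p + 1
  | Proc.plus p q => max (pdepth p) (pdepth q)

theorem step_depth {Act : Type} {p : Proc Act} {a : Act} {p' : Proc Act}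
    (h : Step p a p') : pdepth p' < pdepth p := by
  induction h with
  | pre a p => simp [pdepth]
  | plusL h ih => exact lt_of_lt_of_le ih (by simp [pdepth])
  | plusR h ih => exact lt_of_lt_of_le ih (by simp [pdepth])

theorem depth_le_iff {Act : Type} (p : Proc Act) (n : Nat) :
    pdepth p ≤ n ↔ ∀ a p', Step p a p' → pdepth p' < n := by
  induction p with
  | nil =>
    simp only [pdepth]
    constructor
    · intro _ a p' h; cases h
    · intro _; exact Nat.zero_le n
  | pre b q ih =>
    constructor
    · intro h a p' hs
      cases hs
      exact lt_of_lt_of_le (Nat.lt.base _) h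
    · intro h
      have := h b q (Step.pre b q)
      simpa [pdepth] using this
  | plus q r ihq ihr =>
    constructor
    · intro h a p' hs
      cases hs with
      | plusL hs => exact (ihq.1 (le_trans (by simp [pdepth]) h)) a p' hs
      | plusR hs => exact (ihr.1 (le_trans (by simp [pdepth]) h)) a p' hs
    · intro h
      have h1 : pdepth q ≤ n := ihq.2 (fun a p' hs => h a p' (Step.plusL hs))
      have h2 : pdepth r ≤ n := ihr.2 (fun a p' hs => h a p' (Step.plusR hs))
      simpa [pdepth] using And.intro h1 h2

theorem sim_depth {Act : Type} : ∀ n (p q : Proc Act), pdepth p ≤ n →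
    Sim p q → pdepth p ≤ pdepth q := by
  intro n
  induction n with
  | zero => intro p q h _; exact le_trans h (Nat.zero_le _)
  | succ n ih =>
    intro p q h hsim
    obtain ⟨R, hR, hpq⟩ := hsim
    rw [depth_le_iff]
    intro a p' hs
    obtain ⟨q', hq', hR'⟩ := hR p q hpq a p' hs
    have hd : pdepth p' ≤ n := Nat.lt_succ_iff.mp (lt_of_lt_of_le (step_depth hs) h)
    have := ih p' q' hd ⟨R, hR, hR'⟩
    exact lt_of_le_of_lt this (step_depth hq')

theorem sat_preserved {Act : Type} {φ : HML Act} (hφ : InLS φ) :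
    ∀ {p q : Proc Act}, Sim p q → Sat p φ → Sat q φ := by
  induction hφ with
  | tt => intro p q _ _; trivial
  | ff => intro p q _ h; exact h.elim
  | conj h1 h2 ih1 ih2 => intro p q hs h; exact ⟨ih1 hs h.1, ih2 hs h.2⟩
  | disj h1 h2 ih1 ih2 =>
    intro p q hs h
    cases h with
    | inl h => exact Or.inl (ih1 hs h)
    | inr h => exact Or.inr (ih2 hs h)
  | dia h ih =>
    intro p q hs hsat
    obtain ⟨p', hp', hsp'⟩ := hsat
    obtain ⟨R, hR, hpq⟩ := hs
    obtain ⟨q', hq', hR'⟩ := hR p q hpq _ p' hp'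
    exact ⟨q', hq', ih ⟨R, hR, hR'⟩ hsp'⟩

theorem sim_refl {Act : Type} (p : Proc Act) : Sim p p :=
  ⟨Eq, fun p q h a p' hs => ⟨p', h ▸ hs, rfl⟩, rfl⟩

/-- No formula of `L_S` is characteristic for any process with respect to
simulation equivalence. -/
theorem no_LS_characteristic_mod_simEquiv {Act : Type} [Fintype Act] [Nonempty Act] :
    ¬ ∃ (φ : HML Act) (p : Proc Act), InLS φ ∧
      ∀ q : Proc Act, Sat q φ ↔ (Sim p q ∧ Sim q p) := by
  
  rintro ⟨φ, p, hLS, hchar⟩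
  obtain ⟨a⟩ := ‹Nonempty Act›
  set q0 := Proc.plus p (Proc.pre a p) with hq0
  -- p ⊨ φ
  have hpφ : Sat p φ := (hchar p).mpr ⟨sim_refl p, sim_refl p⟩
  -- p ≲ q0
  have hsim : Sim p q0 := by
    refine ⟨fun x y => (x = p ∧ y = q0) ∨ x = y, ?_, Or.inl ⟨rfl, rfl⟩⟩
    intro x y hxy b x' hs
    cases hxy with
    | inl h =>
      refine ⟨x', ?_, Or.inr rfl⟩
      rw [h.2, hq0]
      exact Step.plusL (h.1 ▸ hs)
    | inr h => exact ⟨x', h ▸ hs, Or.inr rfl⟩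
  have hq0φ : Sat q0 φ := sat_preserved hLS hsim hpφ
  obtain ⟨_, hq0p⟩ := (hchar q0).mp hq0φ
  obtain ⟨R, hR, hRq0p⟩ := hq0p
  have hstep : Step q0 a p := Step.plusR (Step.pre a p)
  obtain ⟨p', hp', hR'⟩ := hR q0 p hRq0p a p hstep
  have h1 : pdepth p ≤ pdepth p' := sim_depth (pdepth p) p p' le_rfl ⟨R, hR, hR'⟩
  exact absurd h1 (not_le.mpr (step_depth hp'))
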